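/- Let p : ℕ → ℕ satisfy p_1 = 1 and, for each n ≥ 1, either p_n = 1 or p_n is a prime with p_n ≡ 1 (mod n). Let g : ℕ → ℕ satisfy g_n = 0 whenever p_n = 1, and let g_n be a primitive root modulo p_n (i.e. the residue of g_n generates the cyclic group (ℤ/p_nℤ)^×) whenever p_n is prime. Let G = ∏_{n≥1} ℤ/p_nℤ (direct product of additive groups) and define T : G → G coordinatewise by T(x)_n = g_n^{(p_n−1)/n}·x_n (and T(x)_n = x_n when p_n = 1). Then for every m ≥ 1 the set of fixed points of the m-th iterate T^m is finite and its cardinality equals ∏_{d | m} p_d. -/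

import Mathlib

theorem F_method_periodic_point_count (p g : ℕ → ℕ)
    (hp1 : p 1 = 1)
    (hp : ∀ n : ℕ, 1 ≤ n → p n = 1 ∨ ((p n).Prime ∧ p n ≡ 1 [MOD n]))
    (hg1 : ∀ n : ℕ, 1 ≤ n → p n = 1 → g n = 0)
    (hg : ∀ n : ℕ, 1 ≤ n → (p n).Prime →
      orderOf ((g n : ZMod (p n))) = p n - 1)
    (T : (∀ i : {k : ℕ // 1 ≤ k}, ZMod (p i)) → (∀ i : {k : ℕ // 1 ≤ k}, ZMod (p i)))
    (hT : ∀ (x : ∀ i : {k : ℕ // 1 ≤ k}, ZMod (p i)) (i : {k : ℕ // 1 ≤ k}),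
      T x i = (g i : ZMod (p i)) ^ ((p i - 1) / (i : ℕ)) * x i)
    (m : ℕ) (hm : 1 ≤ m) :
    {x : ∀ i : {k : ℕ // 1 ≤ k}, ZMod (p i) | T^[m] x = x}.Finite ∧
    {x : ∀ i : {k : ℕ // 1 ≤ k}, ZMod (p i) | T^[m] x = x}.ncard =
      ∏ d ∈ m.divisors, p d := by
  set ι := {k : ℕ // 1 ≤ k}
  -- iterate formula
  have hiter : ∀ (j : ℕ) (x : ∀ i : ι, ZMod (p i)) (i : ι),
      T^[j] x i = ((g i : ZMod (p i)) ^ ((p i - 1) / (i : ℕ))) ^ j * x i := by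
    intro j
    induction j with
    | zero => intro x i; simp
    | succ j ih =>
      intro x i
      rw [Function.iterate_succ_apply', hT, ih, pow_succ]
      ring
  -- order of the multiplier in the prime case
  have horder : ∀ i : ι, (p i).Prime →
      orderOf ((g i : ZMod (p i)) ^ ((p i - 1) / (i : ℕ))) = (i : ℕ) := by
    intro i hq
    have h2 : 2 ≤ p i := hq.two_le
    have hdvd : (i : ℕ) ∣ p i - 1 := by
      have := ((hp i i.2).resolve_left hq.one_lt.ne').2
      exact (Nat.modEq_iff_dvd' hq.one_le).mp this.symm
    have hne : (p i - 1) / (i : ℕ) ≠ 0 := by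
      have := Nat.div_dvd_of_dvd hdvd
      intro h
      rw [h] at this
      simp at this
      omega
    have hdvd2 : (p i - 1) / (i : ℕ) ∣ orderOf ((g i : ZMod (p i))) := by
      rw [hg i i.2 hq]
      exact Nat.div_dvd_of_dvd hdvd
    rw [orderOf_pow_of_dvd hne hdvd2, hg i i.2 hq, Nat.div_div_self hdvd (by omega)]
  -- characterization of fixed points
  have key : ∀ x : ∀ i : ι, ZMod (p i),
      T^[m] x = x ↔ ∀ i : ι, ¬((i : ℕ) ∣ m) → x i = 0 := by
    intro x
    constructor
    · intro h i hnd
      rcases hp i i.2 with h1 | ⟨hq, _⟩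
      · haveI : Subsingleton (ZMod (p i)) := by rw [h1]; infer_instance
        exact Subsingleton.elim _ _
      · haveI := Fact.mk hq
        have hx := congrFun h i
        rw [hiter m x i] at hx
        have hpow : ((g i : ZMod (p i)) ^ ((p i - 1) / (i : ℕ))) ^ m ≠ 1 := by
          intro h1
          exact hnd (by rw [← horder i hq]; exact orderOf_dvd_of_pow_eq_one h1)
        have : (((g i : ZMod (p i)) ^ ((p i - 1) / (i : ℕ))) ^ m - 1) * x i = 0 := by
          rw [sub_mul, one_mul, hx, sub_self]
        rcases mul_eq_zero.mp this with h2 | h2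
        · exact absurd (by linear_combination h2) hpow
        · exact h2
    · intro h
      funext i
      rw [hiter m x i]
      by_cases hd : (i : ℕ) ∣ m
      · rcases hp i i.2 with h1 | ⟨hq, _⟩
        · haveI : Subsingleton (ZMod (p i)) := by rw [h1]; infer_instance
          exact Subsingleton.elim _ _
        · have : ((g i : ZMod (p i)) ^ ((p i - 1) / (i : ℕ))) ^ m = 1 := by
            apply orderOf_dvd_iff_pow_eq_one.mp
            rw [horder i hq]; exact hd
          rw [this, one_mul]
      · rw [h i hd, mul_zero]
  have hm0 : m ≠ 0 := by omega
  -- the divisor index type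
  set D := {i : ι // (i : ℕ) ∣ m} with hD
  let e : D ≃ {d // d ∈ m.divisors} :=
    { toFun := fun i => ⟨(i.1 : ℕ), Nat.mem_divisors.mpr ⟨i.2, hm0⟩⟩
      invFun := fun d => ⟨⟨d.1, (Nat.pos_of_mem_divisors d.2)⟩, (Nat.mem_divisors.mp d.2).1⟩
      left_inv := fun i => rfl
      right_inv := fun d => rfl }
  haveI : Fintype D := Fintype.ofEquiv _ e.symm
  haveI hfin : ∀ i : D, Finite (ZMod (p i.1)) := by
    intro i
    rcases hp i.1 i.1.2 with h1 | ⟨hq, _⟩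
    · rw [h1]; infer_instance
    · haveI : NeZero (p i.1) := ⟨hq.pos.ne'⟩
      infer_instance
  set S := {x : ∀ i : ι, ZMod (p i) | T^[m] x = x} with hS
  -- the restriction bijection
  have Φbij : Function.Bijective (fun (x : S) (i : D) => x.1 i.1) := by
    constructor
    · rintro ⟨x, hx⟩ ⟨y, hy⟩ hxy
      ext i
      show x i = y i
      by_cases hd : (i : ℕ) ∣ m
      · exact congrFun hxy ⟨i, hd⟩
      · rw [(key x).mp hx i hd, (key y).mp hy i hd]
    · intro y
      refine ⟨⟨fun i => if h : (i : ℕ) ∣ m then y ⟨i, h⟩ else 0, ?_⟩, ?_⟩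
      · apply (key _).mpr
        intro i hd
        exact dif_neg hd
      · funext i
        simp only [dif_pos i.2]
        rfl
  have hfinS : S.Finite := by
    rw [← Set.finite_coe_iff]
    exact Finite.of_injective _ Φbij.injective
  refine ⟨hfinS, ?_⟩
  have hcard : S.ncard = Nat.card (∀ i : D, ZMod (p i.1)) := by
    rw [← Nat.card_coe_set_eq]
    exact Nat.card_eq_of_bijective _ Φbij
  rw [hcard, Nat.card_pi]
  have : ∀ i : D, Nat.card (ZMod (p i.1)) = p i.1 := fun i => Nat.card_zmod _
  rw [Finset.prod_congr rfl (fun i _ => this i)]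
  rw [← Finset.prod_coe_sort m.divisors p]
  exact Fintype.prod_equiv e (fun i : D => p i.1) (fun d => p d.1) (fun i => rfl)
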